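/- Let μ, ν be two locally finite infinite Borel measures on ℝ₊ with ν absolutely continuous w.r.t. μ and with Radon–Nikodym derivative dν/dμ(x) → c ≠ 0 as x → +∞. Then a function F ∈ L^∞ has uniform infinite-volume average w.r.t. ν if and only if it has one w.r.t. μ, and in that case the two averages coincide. -/

import Mathlib

open Real Filter MeasureTheory ENNReal

def HasUnifAvg (μ : Measure ℝ) (F : ℝ → ℝ) (A : ℝ) : Prop :=
  ∀ ε : ℝ, 0 < ε → ∃ R : ℝ, 0 < R ∧ ∀ a b : ℝ, 0 ≤ a → a ≤ b →
    R ≤ (μ (Set.Icc a b)).toReal →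
    |((μ (Set.Icc a b)).toReal)⁻¹ * ∫ x in Set.Icc a b, F x ∂μ - A| ≤ ε

/-- Transfer lemma: if `ν`-quantities are comparable to `c` times `μ`-quantities on
intervals, up to an error `δ * μ(V) + B` for arbitrarily small `δ`, then a uniform
average w.r.t. `μ` transfers to one w.r.t. `ν`. -/
private lemma avg_transfer (μ ν : Measure ℝ) (F : ℝ → ℝ) (A c : ℝ) (hc : 0 < c)
    (key : ∀ δ : ℝ, 0 < δ → ∃ B : ℝ, 0 ≤ B ∧ ∀ a b : ℝ, 0 ≤ a → a ≤ b →
      |(ν (Set.Icc a b)).toReal - c * (μ (Set.Icc a b)).toReal|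
        ≤ δ * (μ (Set.Icc a b)).toReal + B ∧
      |(∫ x in Set.Icc a b, F x ∂ν) - c * ∫ x in Set.Icc a b, F x ∂μ|
        ≤ δ * (μ (Set.Icc a b)).toReal + B) :
    HasUnifAvg μ F A → HasUnifAvg ν F A := by
  intro hμ ε hε
  obtain ⟨D, hD0, hAD⟩ : ∃ D : ℝ, 0 < D ∧ |A| + 1 ≤ D := ⟨|A| + 1, by positivity, le_rfl⟩
  obtain ⟨δ, hδ0, hδc, hδε⟩ : ∃ δ : ℝ, 0 < δ ∧ δ ≤ c / 2 ∧ δ ≤ ε * c / (16 * D) :=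
    ⟨min (c / 2) (ε * c / (16 * D)), lt_min (by positivity) (by positivity),
      min_le_left _ _, min_le_right _ _⟩
  obtain ⟨B, hB0, hkey⟩ := key δ hδ0
  obtain ⟨Rμ, hRμ0, hμav⟩ := hμ (ε / 16) (by positivity)
  refine ⟨1 + B + 2 * c * Rμ + 4 * D * B / ε, by positivity, ?_⟩
  intro a b ha hab hn
  obtain ⟨h1, h2⟩ := hkey a b ha hab
  have hμav' := hμav a b ha hab
  set m : ℝ := (μ (Set.Icc a b)).toReal with hm
  set n : ℝ := (ν (Set.Icc a b)).toReal with hnn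
  set Iμ : ℝ := ∫ x in Set.Icc a b, F x ∂μ with hIμ
  set Iν : ℝ := ∫ x in Set.Icc a b, F x ∂ν with hIν
  have hm0 : 0 ≤ m := ENNReal.toReal_nonneg
  have hn1 : 1 + B + 2 * c * Rμ ≤ n := by
    have : 0 ≤ 4 * D * B / ε := by positivity
    linarith
  have hn0 : 0 < n := by nlinarith
  clear hkey hμav key hμ
  have h1l := (abs_le.1 h1).1
  have h1r := (abs_le.1 h1).2
  have hBn : B ≤ ε * n / (4 * D) := by
    have hcR : 0 < c * Rμ := mul_pos hc hRμ0
    have h : 4 * D * B / ε ≤ n := by linarith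
    rw [div_le_iff₀ (by positivity : (0:ℝ) < ε)] at h
    rw [le_div_iff₀ (by positivity : (0:ℝ) < 4 * D)]
    linarith
  -- m ≤ 4 n / c
  have hmub : c * m ≤ 4 * n := by nlinarith
  -- m ≥ Rμ (strictly, m > Rμ)
  have hmlb : Rμ < m := by nlinarith
  have hmpos : 0 < m := lt_trans hRμ0 hmlb
  have hμest := hμav' (le_of_lt hmlb)
  have hμest' : |Iμ - A * m| ≤ ε / 16 * m := by
    have heq : Iμ - A * m = m * (m⁻¹ * Iμ - A) := by
      field_simp
    rw [heq, abs_mul, abs_of_pos hmpos, mul_comm (ε / 16) m]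
    exact mul_le_mul_of_nonneg_left hμest hmpos.le
  have hkey3 : |Iν - A * n| ≤ ε * n := by
    have hdecomp : Iν - A * n = (Iν - c * Iμ) + c * (Iμ - A * m) + A * (c * m - n) := by
      ring
    have hb1 : |Iν - c * Iμ| ≤ δ * m + B := h2
    have hb2 : |c * (Iμ - A * m)| ≤ c * (ε / 16 * m) := by
      rw [abs_mul, abs_of_pos hc]
      exact mul_le_mul_of_nonneg_left hμest' hc.le
    have hb3 : |A * (c * m - n)| ≤ |A| * (δ * m + B) := by
      rw [abs_mul]
      refine mul_le_mul_of_nonneg_left ?_ (abs_nonneg A)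
      rw [abs_sub_comm] at h1
      exact h1
    have htri : |Iν - A * n| ≤ |Iν - c * Iμ| + |c * (Iμ - A * m)| + |A * (c * m - n)| := by
      rw [hdecomp]
      exact (abs_add_le _ _).trans (by gcongr; exact abs_add_le _ _)
    have hδm : δ * m ≤ ε * n / (4 * D) := by
      have h1' : δ * (c * m) ≤ (ε * c / (16 * D)) * (4 * n) :=
        mul_le_mul hδε hmub (mul_nonneg hc.le hm0) (by positivity)
      have h2' : c * (δ * m) ≤ c * (ε * n / (4 * D)) := by
        calc c * (δ * m) = δ * (c * m) := by ring
          _ ≤ (ε * c / (16 * D)) * (4 * n) := h1'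
          _ = c * (ε * n / (4 * D)) := by field_simp; ring
      exact le_of_mul_le_mul_left h2' hc
    have hcm : c * (ε / 16 * m) ≤ ε * n / 4 := by
      have := mul_le_mul_of_nonneg_left hmub (le_of_lt (by positivity : (0:ℝ) < ε / 16))
      linarith
    have hSnn : (0:ℝ) ≤ δ * m + B := add_nonneg (mul_nonneg hδ0.le hm0) hB0
    have h3 : (1 + |A|) * (δ * m + B) ≤ D * (δ * m + B) :=
      mul_le_mul_of_nonneg_right (by linarith) hSnn
    have e1 : D * (δ * m) ≤ ε * n / 4 := by
      have := mul_le_mul_of_nonneg_left hδm hD0.le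
      have heq : D * (ε * n / (4 * D)) = ε * n / 4 := by field_simp
      linarith
    have e2 : D * B ≤ ε * n / 4 := by
      have := mul_le_mul_of_nonneg_left hBn hD0.le
      have heq : D * (ε * n / (4 * D)) = ε * n / 4 := by field_simp
      linarith
    have hexp : D * (δ * m + B) = D * (δ * m) + D * B := by ring
    have hexp2 : (1 + |A|) * (δ * m + B) = (δ * m + B) + |A| * (δ * m + B) := by ring
    have hεn : 0 < ε * n := mul_pos hε hn0
    linarith [htri, hb1, hb2, hb3, hcm, h3, e1, e2]
  have : |n⁻¹ * Iν - A| = |Iν - A * n| * n⁻¹ := by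
    rw [show n⁻¹ * Iν - A = (Iν - A * n) * n⁻¹ by field_simp,
      abs_mul, abs_inv, abs_of_pos hn0]
  rw [this]
  calc |Iν - A * n| * n⁻¹ ≤ (ε * n) * n⁻¹ := by
        apply mul_le_mul_of_nonneg_right hkey3 (by positivity)
    _ = ε := by field_simp

/-- Key estimate: comparison of the `ν`- and `μ`-integrals of a bounded function over
an interval, where `ν = μ.withDensity ρ` and the density is `δ`-close to `c` past `x₀`. -/
private lemma key_est (μ : Measure ℝ) (ρ : ℝ → ℝ≥0∞) (hρ : Measurable ρ)
    (hμloc : ∀ a b : ℝ, μ (Set.Icc a b) < ⊤)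
    (hνloc : ∀ a b : ℝ, μ.withDensity ρ (Set.Icc a b) < ⊤)
    (G : ℝ → ℝ) (hGm : Measurable G) (C : ℝ) (hC : ∀ x, |G x| ≤ C)
    (c δ x₀ : ℝ) (hc : 0 < c) (hδc : δ < c) (hx₀ : 0 ≤ x₀)
    (htail : ∀ x : ℝ, x₀ ≤ x → |(ρ x).toReal - c| ≤ δ) :
    ∀ a b : ℝ, 0 ≤ a → a ≤ b →
      |(∫ x in Set.Icc a b, G x ∂(μ.withDensity ρ)) - c * ∫ x in Set.Icc a b, G x ∂μ|
        ≤ C * δ * (μ (Set.Icc a b)).toReal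
          + C * ((μ.withDensity ρ (Set.Icc 0 x₀)).toReal
                  + c * (μ (Set.Icc 0 x₀)).toReal) := by
  intro a b ha hab
  have hC0 : (0:ℝ) ≤ C := (abs_nonneg _).trans (hC 0)
  have hδ0 : (0:ℝ) ≤ δ := (abs_nonneg _).trans (htail x₀ le_rfl)
  have hVm : MeasurableSet (Set.Icc a b) := measurableSet_Icc
  have hhdm : MeasurableSet (Set.Icc a b ∩ Set.Iic x₀) := hVm.inter measurableSet_Iic
  have htlm : MeasurableSet (Set.Icc a b ∩ Set.Ioi x₀) := hVm.inter measurableSet_Ioi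
  have hunion : (Set.Icc a b ∩ Set.Iic x₀) ∪ (Set.Icc a b ∩ Set.Ioi x₀) = Set.Icc a b := by
    rw [← Set.inter_union_distrib_left, Set.Iic_union_Ioi, Set.inter_univ]
  have hdisj : Disjoint (Set.Icc a b ∩ Set.Iic x₀) (Set.Icc a b ∩ Set.Ioi x₀) :=
    Disjoint.mono Set.inter_subset_right Set.inter_subset_right
      (Set.Iic_disjoint_Ioi le_rfl)
  have hhdsub : Set.Icc a b ∩ Set.Iic x₀ ⊆ Set.Icc 0 x₀ :=
    fun x hx => ⟨le_trans ha hx.1.1, hx.2⟩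
  have htlsub : Set.Icc a b ∩ Set.Ioi x₀ ⊆ Set.Icc a b := Set.inter_subset_left
  have hμV : μ (Set.Icc a b) ≠ ⊤ := (hμloc a b).ne
  have hνV : μ.withDensity ρ (Set.Icc a b) ≠ ⊤ := (hνloc a b).ne
  have hμhd : μ (Set.Icc a b ∩ Set.Iic x₀) < ⊤ :=
    lt_of_le_of_lt (measure_mono hhdsub) (hμloc 0 x₀)
  have hνhd : μ.withDensity ρ (Set.Icc a b ∩ Set.Iic x₀) < ⊤ :=
    lt_of_le_of_lt (measure_mono hhdsub) (hνloc 0 x₀)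
  have hμtl : μ (Set.Icc a b ∩ Set.Ioi x₀) < ⊤ :=
    lt_of_le_of_lt (measure_mono htlsub) (hμloc a b)
  have hνtl : μ.withDensity ρ (Set.Icc a b ∩ Set.Ioi x₀) < ⊤ :=
    lt_of_le_of_lt (measure_mono htlsub) (hνloc a b)
  -- integrability of `G` on finite-measure sets
  have hGi : ∀ s : Set ℝ, μ s < ⊤ → IntegrableOn G s μ := by
    intro s hs
    haveI : IsFiniteMeasure (μ.restrict s) := ⟨by rwa [Measure.restrict_apply_univ]⟩
    refine (integrable_const C).mono' hGm.aestronglyMeasurable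
      (Eventually.of_forall fun x => ?_)
    rw [Real.norm_eq_abs]; exact hC x
  -- integrability of `(ρ ·).toReal` on sets of finite `ν`-measure
  have hρi : ∀ s : Set ℝ, MeasurableSet s → μ.withDensity ρ s < ⊤ →
      IntegrableOn (fun x => (ρ x).toReal) s μ := by
    intro s hsm hs
    refine integrable_toReal_of_lintegral_ne_top hρ.aemeasurable ?_
    rw [← withDensity_apply ρ hsm]; exact hs.ne
  -- integrability of the product
  have hgi : ∀ s : Set ℝ, MeasurableSet s → μ.withDensity ρ s < ⊤ →
      IntegrableOn (fun x => (ρ x).toReal * G x) s μ := by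
    intro s hsm hs
    refine Integrable.mono' ((hρi s hsm hs).const_mul C)
      ((hρ.ennreal_toReal.mul hGm).aestronglyMeasurable)
      (Eventually.of_forall fun x => ?_)
    rw [Real.norm_eq_abs, abs_mul, abs_of_nonneg ENNReal.toReal_nonneg]
    calc (ρ x).toReal * |G x| ≤ (ρ x).toReal * C :=
          mul_le_mul_of_nonneg_left (hC x) ENNReal.toReal_nonneg
      _ = C * (ρ x).toReal := mul_comm _ _
  -- rewrite the `ν`-integral
  have hIν : ∫ x in Set.Icc a b, G x ∂(μ.withDensity ρ)
      = ∫ x in Set.Icc a b, (ρ x).toReal * G x ∂μ := by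
    have hlt : ∫⁻ x in Set.Icc a b, ρ x ∂μ ≠ ⊤ := by
      rw [← withDensity_apply ρ hVm]; exact hνV
    have hae : ∀ᵐ x ∂(μ.restrict (Set.Icc a b)), ρ x < ⊤ := ae_lt_top hρ hlt
    rw [restrict_withDensity hVm,
      withDensity_congr_ae (hae.mono fun x hx => (ENNReal.coe_toNNReal hx.ne).symm),
      integral_withDensity_eq_integral_smul₀ hρ.ennreal_toNNReal.aemeasurable G]
    simp only [NNReal.smul_def, smul_eq_mul, ENNReal.toReal]
  -- split the integrals
  have hsplit1 : ∫ x in Set.Icc a b, (ρ x).toReal * G x ∂μ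
      = (∫ x in Set.Icc a b ∩ Set.Iic x₀, (ρ x).toReal * G x ∂μ)
        + ∫ x in Set.Icc a b ∩ Set.Ioi x₀, (ρ x).toReal * G x ∂μ := by
    rw [← setIntegral_union hdisj htlm (hgi _ hhdm hνhd) (hgi _ htlm hνtl), hunion]
  have hsplit2 : ∫ x in Set.Icc a b, G x ∂μ
      = (∫ x in Set.Icc a b ∩ Set.Iic x₀, G x ∂μ)
        + ∫ x in Set.Icc a b ∩ Set.Ioi x₀, G x ∂μ := by
    rw [← setIntegral_union hdisj htlm (hGi _ hμhd) (hGi _ hμtl), hunion]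
  -- bound on the head for the product
  have hlt_hd : ∫⁻ x in Set.Icc a b ∩ Set.Iic x₀, ρ x ∂μ ≠ ⊤ := by
    rw [← withDensity_apply ρ hhdm]; exact hνhd.ne
  have B1 : |∫ x in Set.Icc a b ∩ Set.Iic x₀, (ρ x).toReal * G x ∂μ|
      ≤ C * (μ.withDensity ρ (Set.Icc 0 x₀)).toReal := by
    have step12 : |∫ x in Set.Icc a b ∩ Set.Iic x₀, (ρ x).toReal * G x ∂μ|
        ≤ ∫ x in Set.Icc a b ∩ Set.Iic x₀, C * (ρ x).toReal ∂μ := by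
      rw [← Real.norm_eq_abs]
      refine (norm_integral_le_integral_norm _).trans ?_
      refine integral_mono (hgi _ hhdm hνhd).norm ((hρi _ hhdm hνhd).const_mul C)
        (fun x => ?_)
      rw [Real.norm_eq_abs, abs_mul, abs_of_nonneg (ENNReal.toReal_nonneg (a := ρ x))]
      calc (ρ x).toReal * |G x| ≤ (ρ x).toReal * C :=
            mul_le_mul_of_nonneg_left (hC x) ENNReal.toReal_nonneg
        _ = C * (ρ x).toReal := mul_comm _ _
    have step3 : ∫ x in Set.Icc a b ∩ Set.Iic x₀, C * (ρ x).toReal ∂μ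
        = C * ∫ x in Set.Icc a b ∩ Set.Iic x₀, (ρ x).toReal ∂μ :=
      integral_const_mul _ _
    have step4 : ∫ x in Set.Icc a b ∩ Set.Iic x₀, (ρ x).toReal ∂μ
        = (μ.withDensity ρ (Set.Icc a b ∩ Set.Iic x₀)).toReal := by
      rw [integral_toReal hρ.aemeasurable (ae_lt_top hρ hlt_hd),
        withDensity_apply ρ hhdm]
    have step5 : (μ.withDensity ρ (Set.Icc a b ∩ Set.Iic x₀)).toReal
        ≤ (μ.withDensity ρ (Set.Icc 0 x₀)).toReal :=
      ENNReal.toReal_mono (hνloc 0 x₀).ne (measure_mono hhdsub)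
    calc |∫ x in Set.Icc a b ∩ Set.Iic x₀, (ρ x).toReal * G x ∂μ|
        ≤ ∫ x in Set.Icc a b ∩ Set.Iic x₀, C * (ρ x).toReal ∂μ := step12
      _ = C * (μ.withDensity ρ (Set.Icc a b ∩ Set.Iic x₀)).toReal := by
          rw [step3, step4]
      _ ≤ C * (μ.withDensity ρ (Set.Icc 0 x₀)).toReal :=
          mul_le_mul_of_nonneg_left step5 hC0
  -- bound on the head for `G`
  have B2 : |∫ x in Set.Icc a b ∩ Set.Iic x₀, G x ∂μ| ≤ C * (μ (Set.Icc 0 x₀)).toReal := by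
    have h := norm_setIntegral_le_of_norm_le_const hμhd
      (f := G) (C := C) (fun x _ => by rw [Real.norm_eq_abs]; exact hC x)
    rw [Real.norm_eq_abs] at h
    refine h.trans (mul_le_mul_of_nonneg_left ?_ hC0)
    exact ENNReal.toReal_mono (hμloc 0 x₀).ne (measure_mono hhdsub)
  -- bound on the tail
  have B3 : |(∫ x in Set.Icc a b ∩ Set.Ioi x₀, (ρ x).toReal * G x ∂μ)
      - c * ∫ x in Set.Icc a b ∩ Set.Ioi x₀, G x ∂μ|
      ≤ C * δ * (μ (Set.Icc a b)).toReal := by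
    have hsub : ∫ x in Set.Icc a b ∩ Set.Ioi x₀, ((ρ x).toReal * G x - c * G x) ∂μ
        = (∫ x in Set.Icc a b ∩ Set.Ioi x₀, (ρ x).toReal * G x ∂μ)
          - c * ∫ x in Set.Icc a b ∩ Set.Ioi x₀, G x ∂μ := by
      rw [integral_sub (hgi _ htlm hνtl) ((hGi _ hμtl).const_mul c),
        integral_const_mul]
    rw [← hsub]
    have hbd : ∀ x ∈ Set.Icc a b ∩ Set.Ioi x₀,
        ‖(ρ x).toReal * G x - c * G x‖ ≤ C * δ := by
      intro x hx
      rw [Real.norm_eq_abs,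
        show (ρ x).toReal * G x - c * G x = ((ρ x).toReal - c) * G x from by ring,
        abs_mul]
      calc |(ρ x).toReal - c| * |G x| ≤ δ * C :=
            mul_le_mul (htail x (le_of_lt hx.2)) (hC x) (abs_nonneg _) hδ0
        _ = C * δ := mul_comm _ _
    have h := norm_setIntegral_le_of_norm_le_const
      (f := fun x => (ρ x).toReal * G x - c * G x) hμtl hbd
    rw [Real.norm_eq_abs] at h
    refine h.trans (mul_le_mul_of_nonneg_left ?_ (by positivity))
    exact ENNReal.toReal_mono hμV (measure_mono htlsub)
  -- combine
  rw [hIν, hsplit1, hsplit2]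
  have hc2 : |c * ∫ x in Set.Icc a b ∩ Set.Iic x₀, G x ∂μ|
      ≤ c * (C * (μ (Set.Icc 0 x₀)).toReal) := by
    rw [abs_mul, abs_of_pos hc]
    exact mul_le_mul_of_nonneg_left B2 hc.le
  have htri : |((∫ x in Set.Icc a b ∩ Set.Iic x₀, (ρ x).toReal * G x ∂μ)
        + ∫ x in Set.Icc a b ∩ Set.Ioi x₀, (ρ x).toReal * G x ∂μ)
      - c * ((∫ x in Set.Icc a b ∩ Set.Iic x₀, G x ∂μ)
        + ∫ x in Set.Icc a b ∩ Set.Ioi x₀, G x ∂μ)|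
      ≤ |∫ x in Set.Icc a b ∩ Set.Iic x₀, (ρ x).toReal * G x ∂μ|
        + |c * ∫ x in Set.Icc a b ∩ Set.Iic x₀, G x ∂μ|
        + |(∫ x in Set.Icc a b ∩ Set.Ioi x₀, (ρ x).toReal * G x ∂μ)
            - c * ∫ x in Set.Icc a b ∩ Set.Ioi x₀, G x ∂μ| := by
    have heq : ((∫ x in Set.Icc a b ∩ Set.Iic x₀, (ρ x).toReal * G x ∂μ)
        + ∫ x in Set.Icc a b ∩ Set.Ioi x₀, (ρ x).toReal * G x ∂μ)
      - c * ((∫ x in Set.Icc a b ∩ Set.Iic x₀, G x ∂μ)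
        + ∫ x in Set.Icc a b ∩ Set.Ioi x₀, G x ∂μ)
      = (∫ x in Set.Icc a b ∩ Set.Iic x₀, (ρ x).toReal * G x ∂μ)
        + (-(c * ∫ x in Set.Icc a b ∩ Set.Iic x₀, G x ∂μ))
        + ((∫ x in Set.Icc a b ∩ Set.Ioi x₀, (ρ x).toReal * G x ∂μ)
            - c * ∫ x in Set.Icc a b ∩ Set.Ioi x₀, G x ∂μ) := by ring
    rw [heq]
    refine (abs_add_le _ _).trans ?_
    gcongr
    refine (abs_add_le _ _).trans ?_
    rw [abs_neg]
  refine htri.trans ?_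
  have := B1
  have := hc2
  have := B3
  linarith

theorem stmt_2 (μ ν : Measure ℝ) (ρ : ℝ → ℝ≥0∞) (hρ : Measurable ρ)
    (hν : ν = μ.withDensity ρ)
    (hμloc : ∀ a b : ℝ, μ (Set.Icc a b) < ⊤) (hμinf : μ (Set.Ici 0) = ⊤)
    (hνloc : ∀ a b : ℝ, ν (Set.Icc a b) < ⊤) (hνinf : ν (Set.Ici 0) = ⊤)
    (c : ℝ) (hc : c ≠ 0)
    (hlim : Tendsto (fun x => (ρ x).toReal) atTop (nhds c))
    (F : ℝ → ℝ) (hFm : Measurable F) (hFb : ∃ C : ℝ, ∀ x : ℝ, |F x| ≤ C) :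
    ∀ A : ℝ, (HasUnifAvg ν F A ↔ HasUnifAvg μ F A) := by
  subst hν
  set ν := μ.withDensity ρ with hνdef
  intro A
  -- c > 0
  have hc0 : 0 < c := by
    rcases lt_or_gt_of_ne hc with h | h
    · exfalso
      have : 0 ≤ c := ge_of_tendsto' hlim (fun x => ENNReal.toReal_nonneg)
      linarith
    · exact h
  obtain ⟨C₀, hC₀⟩ := hFb
  set C : ℝ := max C₀ 1 with hCdef
  have hC : ∀ x, |F x| ≤ C := fun x => (hC₀ x).trans (le_max_left _ _)
  have hC1 : (1:ℝ) ≤ C := le_max_right _ _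
  have hCpos : (0:ℝ) < C := lt_of_lt_of_le one_pos hC1
  -- the key comparison estimates
  have key : ∀ δ : ℝ, 0 < δ → ∃ B : ℝ, 0 ≤ B ∧ ∀ a b : ℝ, 0 ≤ a → a ≤ b →
      |(ν (Set.Icc a b)).toReal - c * (μ (Set.Icc a b)).toReal|
        ≤ δ * (μ (Set.Icc a b)).toReal + B ∧
      |(∫ x in Set.Icc a b, F x ∂ν) - c * ∫ x in Set.Icc a b, F x ∂μ|
        ≤ δ * (μ (Set.Icc a b)).toReal + B := by
    intro δ hδ
    set δ₀ : ℝ := min (δ / C) (c / 2) with hδ₀def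
    have hδ₀0 : 0 < δ₀ := lt_min (by positivity) (by positivity)
    have hδ₀c : δ₀ < c := lt_of_le_of_lt (min_le_right _ _) (by linarith)
    obtain ⟨N, hN⟩ := Metric.tendsto_atTop.1 hlim δ₀ hδ₀0
    set x₀ : ℝ := max N 0 with hx₀def
    have hx₀ : 0 ≤ x₀ := le_max_right _ _
    have htail : ∀ x : ℝ, x₀ ≤ x → |(ρ x).toReal - c| ≤ δ₀ := by
      intro x hx
      have := hN x (le_trans (le_max_left _ _) hx)
      rw [Real.dist_eq] at this
      exact this.le
    refine ⟨C * ((ν (Set.Icc 0 x₀)).toReal + c * (μ (Set.Icc 0 x₀)).toReal), by positivity, ?_⟩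
    intro a b ha hab
    have hCδ₀ : C * δ₀ ≤ δ := by
      have : δ₀ ≤ δ / C := min_le_left _ _
      calc C * δ₀ ≤ C * (δ / C) := mul_le_mul_of_nonneg_left this hCpos.le
        _ = δ := by field_simp
    have hone : ∀ x : ℝ, |(fun _ : ℝ => (1:ℝ)) x| ≤ C := fun x => by
      simp; linarith
    have h1 := key_est μ ρ hρ hμloc hνloc (fun _ => (1:ℝ)) measurable_const C hone
      c δ₀ x₀ hc0 hδ₀c hx₀ htail a b ha hab
    have h2 := key_est μ ρ hρ hμloc hνloc F hFm C hC
      c δ₀ x₀ hc0 hδ₀c hx₀ htail a b ha hab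
    simp only [setIntegral_const, smul_eq_mul, mul_one] at h1
    have hm0 : (0:ℝ) ≤ (μ (Set.Icc a b)).toReal := ENNReal.toReal_nonneg
    constructor
    · refine h1.trans ?_
      have : C * δ₀ * (μ (Set.Icc a b)).toReal ≤ δ * (μ (Set.Icc a b)).toReal :=
        mul_le_mul_of_nonneg_right hCδ₀ hm0
      linarith
    · refine h2.trans ?_
      have : C * δ₀ * (μ (Set.Icc a b)).toReal ≤ δ * (μ (Set.Icc a b)).toReal :=
        mul_le_mul_of_nonneg_right hCδ₀ hm0
      linarith
  constructor
  · -- ν-average → μ-average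
    apply avg_transfer ν μ F A c⁻¹ (by positivity)
    -- derived key with roles of μ and ν swapped
    intro δ' hδ'
    obtain ⟨δ, hδ0, hδc, hδ'c⟩ : ∃ δ : ℝ, 0 < δ ∧ δ ≤ c / 2 ∧ δ ≤ δ' * c ^ 2 / 4 :=
      ⟨min (c / 2) (δ' * c ^ 2 / 4), lt_min (by positivity) (by positivity),
        min_le_left _ _, min_le_right _ _⟩
    obtain ⟨B, hB0, hk⟩ := key δ hδ0
    refine ⟨(δ' / 2) * B + B / c, by positivity, ?_⟩
    intro a b ha hab
    obtain ⟨k1, k2⟩ := hk a b ha hab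
    set m : ℝ := (μ (Set.Icc a b)).toReal with hm
    set n : ℝ := (ν (Set.Icc a b)).toReal with hn
    have hm0 : 0 ≤ m := ENNReal.toReal_nonneg
    have hn0 : 0 ≤ n := ENNReal.toReal_nonneg
    have k1l := (abs_le.1 k1).1
    have hmub : c * m ≤ 2 * (n + B) := by nlinarith
    have gen : ∀ X Y : ℝ, |Y - c * X| ≤ δ * m + B →
        |X - c⁻¹ * Y| ≤ δ' * n + ((δ' / 2) * B + B / c) := by
      intro X Y h
      have hcne : c ≠ 0 := hc0.ne'
      have hceq : c * (X - c⁻¹ * Y) = c * X - Y := by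
        rw [mul_sub, mul_inv_cancel_left₀ hcne]
      have habs : c * |X - c⁻¹ * Y| = |c * X - Y| := by
        rw [← hceq, abs_mul, abs_of_pos hc0]
      have h' : |c * X - Y| ≤ δ * m + B := by rwa [abs_sub_comm] at h
      have hcB : c * ((δ' / 2) * B + B / c) = c * (δ' / 2) * B + B := by
        field_simp
      have hfin : c * |X - c⁻¹ * Y| ≤ c * (δ' * n + ((δ' / 2) * B + B / c)) := by
        rw [habs, mul_add, hcB]
        have hδm : δ * m ≤ c * (δ' * n) + c * (δ' / 2) * B := by
          have e1 : δ * (c * m) ≤ δ * (2 * (n + B)) :=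
            mul_le_mul_of_nonneg_left hmub hδ0.le
          have e2 : δ * (2 * (n + B)) ≤ (δ' * c ^ 2 / 4) * (2 * (n + B)) :=
            mul_le_mul_of_nonneg_right hδ'c (by nlinarith)
          nlinarith
        linarith
      exact le_of_mul_le_mul_left (by linarith) hc0
    exact ⟨gen m n k1, gen _ _ k2⟩
  · exact avg_transfer μ ν F A c hc0 key
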